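/- For positive integers n, p with 0 ≤ p ≤ n, Σ_{k=1}^{n} B(n,p,k)·y^k = n·y·(1+y)^p · Σ_{j≥0} ((p+1)_j·(p-n+1)_j / ((2)_j · j!))·(-y)^j as polynomials in y, where B(n,p,k) = (n/k)·Σ_{r≥0} C(p,r)·C(n-p,r)·C(n-r-1,k-r-1) and (a)_j denotes the rising factorial. -/

import Mathlib

open Finset

/-- Binomial coefficient `C(a,b)` for integers, with `C(a,b) = 0` unless `0 ≤ b ≤ a`. -/
def C (a b : ℤ) : ℚ := if 0 ≤ b ∧ b ≤ a then (Nat.choose a.toNat b.toNat : ℚ) else 0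

/-- `B(n,p,k) = (n/k) · Σ_{r≥0} C(p,r)·C(n-p,r)·C(n-r-1,k-r-1)`. -/
def B (n p k : ℕ) : ℚ :=
  ((n : ℚ) / k) * ∑ r ∈ range (n + 1),
    C p r * C ((n : ℤ) - p) r * C ((n : ℤ) - r - 1) ((k : ℤ) - r - 1)

/-- Rising factorial `(a)_j = a(a+1)⋯(a+j-1)`. -/
def asc (a : ℝ) (j : ℕ) : ℝ := ∏ t ∈ range j, (a + t)

open Polynomial

/-! ### Auxiliary lemmas -/

lemma Cnat (a b : ℕ) : _root_.C (a:ℤ) (b:ℤ) = (a.choose b : ℚ) := by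
  unfold _root_.C
  by_cases h : b ≤ a
  · simp [h]
  · rw [if_neg (by simpa using h), Nat.choose_eq_zero_of_lt (by omega), Nat.cast_zero]

lemma Cneg (a b : ℤ) (h : b < 0) : _root_.C a b = 0 := by
  unfold _root_.C; rw [if_neg (by omega)]

lemma asc_pos (p j : ℕ) : asc ((p:ℝ)+1) j = (p+j).choose j * j.factorial := by
  induction j with
  | zero => simp [asc]
  | succ j ih =>
    rw [asc, Finset.prod_range_succ, ← asc, ih, show p + (j+1) = p+j+1 by omega]
    have : ((p+j+1) * (p+j).choose j : ℝ) = ((p+j+1).choose (j+1) * (j+1) : ℕ) := by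
      exact_mod_cast congrArg (Nat.cast (R := ℝ)) (Nat.add_one_mul_choose_eq (p + j) j)
    push_cast at this
    rw [Nat.factorial_succ]
    push_cast
    linear_combination (j.factorial : ℝ) * this

lemma asc_two (j : ℕ) : asc 2 j = (j+1).factorial := by
  induction j with
  | zero => simp [asc]
  | succ j ih =>
    rw [asc, Finset.prod_range_succ, ← asc, ih,
      show (j+1+1).factorial = (j+2) * (j+1).factorial from by
        rw [show j+1+1 = j+2 by omega, Nat.factorial_succ]]
    push_cast; ring

lemma asc_one (j : ℕ) : asc 1 j = j.factorial := by
  induction j with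
  | zero => simp [asc]
  | succ j ih =>
    rw [asc, Finset.prod_range_succ, ← asc, ih, Nat.factorial_succ]
    push_cast; ring

lemma asc_neg (q j : ℕ) (h : j < q) :
    asc (1 - (q:ℝ)) j = (-1)^j * ((q-1).choose j * j.factorial) := by
  induction j with
  | zero => simp [asc]
  | succ j ih =>
    rw [asc, Finset.prod_range_succ, ← asc, ih (by omega)]
    have hc : ((q-1).choose (j+1) * (j+1) : ℝ) = ((q-1).choose j : ℝ) * ((q:ℝ) - 1 - j) := by
      have := Nat.choose_succ_right_eq (q-1) j
      have h2 : ((q-1).choose (j+1) * (j+1) : ℝ) = ((q-1).choose j * (q - 1 - j) : ℕ) := by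
        exact_mod_cast congrArg (Nat.cast (R := ℝ)) this
      rw [h2]; push_cast [show ((q:ℕ) - 1 - j : ℕ) = q - (j+1) by omega]
      have : ((q - (j+1) : ℕ) : ℝ) = (q:ℝ) - (j+1) := by
        push_cast [Nat.cast_sub (by omega : j+1 ≤ q)]; ring
      rw [this]; ring
    rw [Nat.factorial_succ]
    push_cast
    have expand : (1 - (q:ℝ) + j) = -((q:ℝ) - 1 - j) := by ring
    rw [expand, pow_succ]
    linear_combination ((-1:ℝ))^j * (j.factorial:ℝ) * hc

lemma asc_neg_zero (q j : ℕ) (hq : 1 ≤ q) (h : q ≤ j) : asc (1 - (q:ℝ)) j = 0 := by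
  apply Finset.prod_eq_zero (i := q - 1) (Finset.mem_range.mpr (by omega))
  have : ((q - 1 : ℕ) : ℝ) = (q:ℝ) - 1 := by push_cast [Nat.cast_sub hq]; ring
  rw [this]; ring

lemma coeff_msum (s : Finset ℕ) (a : ℕ → ℝ) (m : ℕ) :
    (∑ j ∈ s, Polynomial.C (a j) * X^j).coeff m = if m ∈ s then a m else 0 := by
  rw [finset_sum_coeff]
  simp only [coeff_C_mul, coeff_X_pow]
  rw [Finset.sum_congr rfl (fun j _ => by rw [mul_ite, mul_one, mul_zero])]
  exact Finset.sum_ite_eq s m a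

lemma binom_exp (M : ℕ) :
    ((X:ℝ[X])+1)^M = ∑ s ∈ range (M+1), Polynomial.C ((M.choose s : ℝ)) * X^s := by
  ext m
  rw [coeff_msum, coeff_X_add_one_pow]
  split
  · rfl
  · next h => rw [Nat.choose_eq_zero_of_lt (by simpa using h), Nat.cast_zero]

lemma key0 (q m r : ℕ) :
    q.choose r * (if r ≤ m then (q-r).choose (m-r) else 0) = m.choose r * q.choose m := by
  by_cases hrm : r ≤ m
  · rw [if_pos hrm]
    by_cases hmq : m ≤ q
    · rw [← Nat.choose_mul (n := q) hrm]; ring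
    · rw [Nat.choose_eq_zero_of_lt (show q < m by omega), Nat.mul_zero]
      by_cases hrq : r ≤ q
      · rw [Nat.choose_eq_zero_of_lt (show q - r < m - r by omega), Nat.mul_zero]
      · rw [Nat.choose_eq_zero_of_lt (show q < r by omega), Nat.zero_mul]
  · rw [if_neg hrm, Nat.choose_eq_zero_of_lt (show m < r by omega), Nat.mul_zero, Nat.zero_mul]

lemma vdm (p m R : ℕ) (hR : m < R) :
    ∑ r ∈ range R, p.choose r * m.choose r = (p+m).choose m := by
  rw [Nat.add_choose_eq p m m, Finset.Nat.sum_antidiagonal_eq_sum_range_succ_mk]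
  rw [← Finset.sum_subset (Finset.range_subset_range.mpr (by omega : m+1 ≤ R))
      (fun r _ hr => by
        rw [Nat.choose_eq_zero_of_lt (show m < r by simp at hr; omega), Nat.mul_zero])]
  refine Finset.sum_congr rfl fun r hr => ?_
  simp only
  rw [Nat.choose_symm (by simp at hr; omega : r ≤ m)]

lemma key1 (p q m : ℕ) :
    ∑ r ∈ range (p+q+1), p.choose r * q.choose r * (if r ≤ m then (q-r).choose (m-r) else 0)
      = (p+m).choose m * q.choose m := by
  have : ∀ r ∈ range (p+q+1), p.choose r * q.choose r * (if r ≤ m then (q-r).choose (m-r) else 0)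
      = p.choose r * m.choose r * q.choose m := by
    intro r _; rw [mul_assoc, key0, ← mul_assoc]
  rw [Finset.sum_congr rfl this, ← Finset.sum_mul]
  by_cases hm : m ≤ p + q
  · rw [vdm p m (p+q+1) (by omega)]
  · rw [Nat.choose_eq_zero_of_lt (show q < m by omega), Nat.mul_zero, Nat.mul_zero]

/-! ### The polynomials -/

noncomputable def Fp (p q : ℕ) : ℝ[X] :=
  ∑ j ∈ range q, Polynomial.C (((p+j).choose j * (q-1).choose j : ℝ)/(j+1)) * X^j
noncomputable def Ep (p q : ℕ) : ℝ[X] :=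
  ∑ m ∈ range (q+1), Polynomial.C (((p+m).choose m * q.choose m : ℝ)) * X^m
noncomputable def Lp (p q : ℕ) : ℝ[X] :=
  ∑ r ∈ range (p+q+1), Polynomial.C ((p.choose r * q.choose r : ℝ)) * ((X+1)^(q-r) * X^r)
noncomputable def Dp (p q : ℕ) : ℝ[X] :=
  ∑ r ∈ range (p+q+1), Polynomial.C ((p.choose r * q.choose r : ℝ)) * ((X+1)^(p+q-1-r) * X^r)
noncomputable def Pp (p q : ℕ) : ℝ[X] :=
  ∑ k ∈ Icc 1 (p+q), Polynomial.C ((B (p+q) p k : ℝ)) * X^k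

lemma L2 (p q : ℕ) : Lp p q = Ep p q := by
  ext m
  rw [Lp, Ep, finset_sum_coeff, coeff_msum]
  have h1 : ∀ r ∈ range (p+q+1),
      (Polynomial.C ((p.choose r * q.choose r : ℝ)) * ((X+1)^(q-r) * X^r)).coeff m
        = ((p.choose r * q.choose r * (if r ≤ m then (q-r).choose (m-r) else 0) : ℕ) : ℝ) := by
    intro r _
    rw [coeff_C_mul, coeff_mul_X_pow']
    push_cast
    split
    · rw [coeff_X_add_one_pow]
    · ring
  rw [Finset.sum_congr rfl h1, ← Nat.cast_sum, key1]
  split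
  · push_cast; ring
  · next h =>
    rw [Nat.choose_eq_zero_of_lt (by simp at h; omega : q < m), Nat.mul_zero, Nat.cast_zero]

lemma term_shift (a : ℝ) (j : ℕ) :
    Polynomial.C a * X^j + X * derivative (Polynomial.C a * X^j)
      = Polynomial.C (((j:ℝ)+1)*a) * X^j := by
  rw [derivative_C_mul, derivative_X_pow]
  cases j with
  | zero => simp
  | succ t => push_cast; simp only [Nat.add_sub_cancel, map_mul, map_add, map_one]; ring

lemma F_shift (p q : ℕ) : Fp p q + X * derivative (Fp p q)
    = ∑ j ∈ range q, Polynomial.C (((p+j).choose j * (q-1).choose j : ℝ)) * X^j := by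
  rw [Fp, derivative_sum, Finset.mul_sum, ← Finset.sum_add_distrib]
  refine Finset.sum_congr rfl fun j _ => ?_
  rw [term_shift]
  congr 1
  rw [mul_div_assoc', mul_comm, mul_div_assoc]
  rw [div_self (by positivity : ((j:ℝ)+1) ≠ 0), mul_one]

lemma coeff_aux : ∀ (S : ℝ[X]) (m : ℕ), (X * S).coeff m = if 1 ≤ m then S.coeff (m-1) else 0 := by
  intro S m
  rw [show (X:ℝ[X]) * S = S * X^1 by ring, coeff_mul_X_pow']

lemma L5 (p q : ℕ) (hq : 1 ≤ q) :
    (X+1) * (Fp p q + X * derivative (Fp p q)) + Polynomial.C (p:ℝ) * (X * Fp p q) = Ep p q := by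
  rw [F_shift]
  ext m
  rw [Ep, coeff_msum, coeff_add, coeff_C_mul, coeff_aux, add_mul, one_mul, coeff_add, coeff_aux,
    Fp, coeff_msum, coeff_msum, coeff_msum]
  rcases Nat.eq_zero_or_pos m with hm | hm
  · subst hm
    simp [hq, show ¬ q = 0 by omega]
  · obtain ⟨t, rfl⟩ : ∃ t, m = t + 1 := ⟨m - 1, by omega⟩
    rw [if_pos (by omega : 1 ≤ t+1), if_pos (by omega : 1 ≤ t+1), Nat.add_sub_cancel]
    by_cases htq : t + 1 ≤ q
    · rw [if_pos (Finset.mem_range.mpr (by omega : t < q)),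
        if_pos (Finset.mem_range.mpr (by omega : t < q)),
        if_pos (Finset.mem_range.mpr (by omega : t+1 < q+1))]
      have hA : (((p+t).choose t * (q-1).choose t : ℝ))
            + (p:ℝ) * (((p+t).choose t * (q-1).choose t : ℝ)/(t+1))
          = ((p+t+1).choose (t+1) : ℝ) * ((q-1).choose t) := by
        have hn : ((p+t+1) * (p+t).choose t : ℝ) = (((p+t+1).choose (t+1) * (t+1) : ℕ) : ℝ) :=
          by exact_mod_cast congrArg (Nat.cast (R := ℝ)) (Nat.add_one_mul_choose_eq (p+t) t)
        push_cast at hn ⊢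
        field_simp
        nlinarith [hn]
      have hB : (if t+1 ∈ range q then (((p+(t+1)).choose (t+1) * (q-1).choose (t+1) : ℝ)) else 0)
          = ((p+t+1).choose (t+1) : ℝ) * ((q-1).choose (t+1)) := by
        split
        · push_cast [show p + (t+1) = p+t+1 by omega]; ring
        · next h =>
          rw [Nat.choose_eq_zero_of_lt (by simp at h; omega : q - 1 < t+1), Nat.cast_zero,
            mul_zero]
      have hC : ((q-1).choose t + (q-1).choose (t+1) : ℕ) = q.choose (t+1) := by
        rw [← Nat.choose_succ_succ (q-1) t]; congr 1; omega
      have hCr : ((q.choose (t+1) : ℕ) : ℝ) = ((q-1).choose t : ℝ) + ((q-1).choose (t+1) : ℝ) := by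
        exact_mod_cast congrArg (Nat.cast (R := ℝ)) hC.symm
      push_cast [show p + (t+1) = p+t+1 by omega] at hB ⊢
      rw [hB, hCr]
      linear_combination hA
    · rw [if_neg (by simp; omega), if_neg (by simp; omega), if_neg (by simp; omega),
        if_neg (by simp; omega)]
      ring

lemma I1 (N r : ℕ) (hr : r + 1 ≤ N) :
    ∑ k ∈ Icc 1 N, Polynomial.C (((C ((N:ℤ)-r-1) ((k:ℤ)-r-1) : ℚ) : ℝ)) * X^(k-1)
      = (X+1)^(N-1-r) * X^r := by
  have hval : ∀ k ∈ Icc 1 N,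
      Polynomial.C (((C ((N:ℤ)-r-1) ((k:ℤ)-r-1) : ℚ) : ℝ)) * X^(k-1)
        = if r+1 ≤ k then Polynomial.C (((N-1-r).choose (k-1-r) : ℝ)) * X^(k-1) else 0 := by
    intro k hk
    simp only [Finset.mem_Icc] at hk
    by_cases h : r + 1 ≤ k
    · rw [if_pos h]
      have e1 : (N:ℤ) - r - 1 = ((N-1-r : ℕ) : ℤ) := by omega
      have e2 : (k:ℤ) - r - 1 = ((k-1-r : ℕ) : ℤ) := by omega
      rw [e1, e2, Cnat]
      norm_cast
    · rw [if_neg h, Cneg _ _ (by omega), Rat.cast_zero, map_zero, zero_mul]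
  rw [Finset.sum_congr rfl hval,
    ← Finset.sum_filter (fun k => r + 1 ≤ k)
      (fun k => Polynomial.C (((N-1-r).choose (k-1-r) : ℝ)) * X^(k-1))]
  have hfil : (Icc 1 N).filter (fun k => r + 1 ≤ k) = Icc (r+1) N := by
    ext k; simp only [Finset.mem_filter, Finset.mem_Icc]; omega
  rw [hfil]
  rw [show (X+1 : ℝ[X])^(N-1-r) * X^r
      = ∑ s ∈ range (N-1-r+1), Polynomial.C (((N-1-r).choose s : ℝ)) * X^s * X^r from by
    rw [binom_exp, Finset.sum_mul]]
  rw [show N-1-r+1 = N - r by omega]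
  refine (Finset.sum_bij' (fun s _ => s + (r+1)) (fun k _ => k - (r+1)) ?_ ?_ ?_ ?_ ?_).symm
  · intro s hs; simp only [Finset.mem_range] at hs; simp only [Finset.mem_Icc]; omega
  · intro k hk; simp only [Finset.mem_Icc] at hk; simp only [Finset.mem_range]; omega
  · intro s hs; omega
  · intro k hk; simp only [Finset.mem_Icc] at hk; omega
  · intro s hs
    simp only [Finset.mem_range] at hs
    rw [show s + (r+1) - 1 - r = s by omega, show s + (r+1) - 1 = s + r by omega,
      mul_assoc, ← pow_add]

lemma L1 (p q : ℕ) (hq : 1 ≤ q) :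
    derivative (Pp p q) = Polynomial.C ((p+q : ℕ) : ℝ) * Dp p q := by
  set N := p + q with hN
  rw [Pp, derivative_sum]
  have step1 : ∀ k ∈ Icc 1 N,
      derivative (Polynomial.C ((B N p k : ℝ)) * X^k)
        = ∑ r ∈ range (N+1),
            Polynomial.C (((N:ℝ)) * ((((C (p:ℤ) (r:ℤ) * C ((N:ℤ)-p) (r:ℤ) : ℚ) : ℝ)) *
              (((C ((N:ℤ)-r-1) ((k:ℤ)-r-1) : ℚ) : ℝ)))) * X^(k-1) := by
    intro k hk
    simp only [Finset.mem_Icc] at hk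
    rw [derivative_C_mul, derivative_X_pow, ← mul_assoc, ← map_mul]
    have hk0 : (k:ℚ) ≠ 0 := Nat.cast_ne_zero.mpr (by omega)
    have hBq : (B N p k) * (k:ℚ) = ∑ r ∈ range (N+1), (N:ℚ) *
        ((C (p:ℤ) (r:ℤ) * C ((N:ℤ)-p) (r:ℤ)) * C ((N:ℤ)-r-1) ((k:ℤ)-r-1)) := by
      rw [B, div_mul_eq_mul_div, div_mul_cancel₀ _ hk0, Finset.mul_sum]
    have hB : ((B N p k : ℚ) : ℝ) * ((k:ℕ) : ℝ) = ∑ r ∈ range (N+1), (N:ℝ) *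
        ((((C (p:ℤ) (r:ℤ) * C ((N:ℤ)-p) (r:ℤ) : ℚ) : ℝ)) *
          (((C ((N:ℤ)-r-1) ((k:ℤ)-r-1) : ℚ) : ℝ))) := by
      have := congrArg (Rat.cast (K := ℝ)) hBq
      push_cast at this ⊢
      convert this using 2
    rw [hB, map_sum, Finset.sum_mul]
  rw [Finset.sum_congr rfl step1, Finset.sum_comm]
  rw [Dp, Finset.mul_sum]
  refine Finset.sum_congr rfl fun r hr => ?_
  have hsplit : ∀ k : ℕ,
      Polynomial.C (((N:ℝ)) * ((((C (p:ℤ) (r:ℤ) * C ((N:ℤ)-p) (r:ℤ) : ℚ) : ℝ)) *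
          (((C ((N:ℤ)-r-1) ((k:ℤ)-r-1) : ℚ) : ℝ)))) * X^(k-1)
        = Polynomial.C ((N:ℝ)) * (Polynomial.C ((p.choose r * q.choose r : ℝ)) *
            (Polynomial.C (((C ((N:ℤ)-r-1) ((k:ℤ)-r-1) : ℚ) : ℝ)) * X^(k-1))) := by
    intro k
    have hab : (((C (p:ℤ) (r:ℤ) * C ((N:ℤ)-p) (r:ℤ) : ℚ) : ℝ)) = (p.choose r * q.choose r : ℝ) := by
      rw [show (N:ℤ) - (p:ℕ) = ((q:ℕ):ℤ) by push_cast [hN]; ring, Cnat, Cnat]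
      push_cast; ring
    rw [hab, map_mul, map_mul, mul_assoc, mul_assoc]
  rw [Finset.sum_congr rfl (fun k _ => hsplit k), ← Finset.mul_sum, ← Finset.mul_sum]
  congr 1
  by_cases hz : p.choose r * q.choose r = 0
  · have hz' : ((p.choose r : ℝ) * (q.choose r : ℝ)) = 0 := by
      exact_mod_cast congrArg (Nat.cast (R:=ℝ)) hz
    rw [hz', map_zero, zero_mul, zero_mul]
  · have hrp : r ≤ p := by
      by_contra h
      exact hz (by rw [Nat.choose_eq_zero_of_lt (by omega), Nat.zero_mul])
    rw [I1 N r (by omega)]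

lemma L3 (p q : ℕ) (hq : 1 ≤ q) : (X+1) * Dp p q = (X+1)^p * Lp p q := by
  rw [Dp, Lp, Finset.mul_sum, Finset.mul_sum]
  refine Finset.sum_congr rfl fun r _ => ?_
  by_cases hz : p.choose r * q.choose r = 0
  · have hz' : ((p.choose r : ℝ) * (q.choose r : ℝ)) = 0 := by
      exact_mod_cast congrArg (Nat.cast (R:=ℝ)) hz
    rw [hz', map_zero, zero_mul, mul_zero, zero_mul, mul_zero]
  · have hrp : r ≤ p := by
      by_contra h; exact hz (by rw [Nat.choose_eq_zero_of_lt (by omega), Nat.zero_mul])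
    have hrq : r ≤ q := by
      by_contra h
      exact hz (by rw [Nat.choose_eq_zero_of_lt (show q < r by omega), Nat.mul_zero])
    have e1 : p+q-1-r+1 = p + (q - r) := by omega
    calc (X+1) * (Polynomial.C ((p.choose r * q.choose r : ℝ)) * ((X+1)^(p+q-1-r) * X^r))
        = Polynomial.C ((p.choose r * q.choose r : ℝ)) * (((X+1)^(p+q-1-r) * (X+1)) * X^r) := by
          ring
      _ = Polynomial.C ((p.choose r * q.choose r : ℝ)) * (((X+1)^p * (X+1)^(q-r)) * X^r) := by
          rw [← pow_succ, e1, pow_add]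
      _ = (X+1)^p * (Polynomial.C ((p.choose r * q.choose r : ℝ)) * ((X+1)^(q-r) * X^r)) := by
          ring

lemma L4 (p q : ℕ) :
    (X+1) * derivative (X * ((X+1)^p * Fp p q))
      = (X+1)^p * ((X+1) * (Fp p q + X * derivative (Fp p q))
          + Polynomial.C (p:ℝ) * (X * Fp p q)) := by
  set F := Fp p q
  rw [derivative_mul, derivative_mul, derivative_pow, derivative_X]
  have hd1 : derivative (X + 1 : ℝ[X]) = 1 := by
    rw [derivative_add, derivative_X, derivative_one, add_zero]
  rw [hd1]
  have hpow : (X+1:ℝ[X]) * (Polynomial.C ((p:ℕ):ℝ) * (X+1)^(p-1))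
      = Polynomial.C ((p:ℕ):ℝ) * (X+1)^p := by
    cases p with
    | zero => simp
    | succ t => rw [Nat.add_sub_cancel]; ring_nf
  linear_combination (X * F) * hpow

lemma X1ne : (X + 1 : ℝ[X]) ≠ 0 := fun h => by
  simpa using congrArg (fun f => Polynomial.coeff f 0) h

lemma PQ (p q : ℕ) (hq : 1 ≤ q) :
    Pp p q = Polynomial.C ((p+q:ℕ):ℝ) * (X * ((X+1)^p * Fp p q)) := by
  set Q : ℝ[X] := Polynomial.C ((p+q:ℕ):ℝ) * (X * ((X+1)^p * Fp p q)) with hQ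
  have hderiv : derivative (Pp p q) = derivative Q := by
    apply mul_left_cancel₀ X1ne
    rw [L1 p q hq]
    rw [hQ, derivative_C_mul]
    calc (X+1) * (Polynomial.C ((p+q:ℕ):ℝ) * Dp p q)
        = Polynomial.C ((p+q:ℕ):ℝ) * ((X+1) * Dp p q) := by ring
      _ = Polynomial.C ((p+q:ℕ):ℝ) * ((X+1)^p * Ep p q) := by rw [L3 p q hq, L2]
      _ = Polynomial.C ((p+q:ℕ):ℝ) * ((X+1) * derivative (X * ((X+1)^p * Fp p q))) := by
          rw [L4, L5 p q hq]
      _ = (X+1) * (Polynomial.C ((p+q:ℕ):ℝ) * derivative (X * ((X+1)^p * Fp p q))) := by ring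
  have hsub : derivative (Pp p q - Q) = 0 := by
    rw [derivative_sub, hderiv, sub_self]
  have hc := Polynomial.eq_C_of_derivative_eq_zero hsub
  have hP0 : (Pp p q).coeff 0 = 0 := by
    rw [Pp, finset_sum_coeff]
    refine Finset.sum_eq_zero fun k hk => ?_
    simp only [Finset.mem_Icc] at hk
    rw [coeff_C_mul, coeff_X_pow, if_neg (by omega), mul_zero]
  have hQ0 : Q.coeff 0 = 0 := by
    rw [hQ, coeff_C_mul, coeff_aux, if_neg (by omega), mul_zero]
  have hz : Pp p q - Q = 0 := by
    rw [hc, Polynomial.coeff_sub, hP0, hQ0, sub_zero, map_zero]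
  have := sub_eq_zero.mp hz
  rw [this]

theorem stmt_13 (n p : ℕ) (hn : 1 ≤ n) (hp : p ≤ n) (y : ℝ) (hy : |y| < 1) :
    ∑ k ∈ Icc 1 n, (B n p k : ℝ) * y ^ k =
      (n : ℝ) * y * (1 + y) ^ p *
        ∑' j : ℕ, asc ((p : ℝ) + 1) j * asc ((p : ℝ) - n + 1) j /
          (asc 2 j * Nat.factorial j) * (-y) ^ j := by
  rcases eq_or_ne y 0 with rfl | hy0
  · rw [Finset.sum_eq_zero (fun k hk => by
      simp only [Finset.mem_Icc] at hk
      rw [zero_pow (by omega), mul_zero])]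
    rw [mul_zero, zero_mul, zero_mul]
  have hym : -1 < y := (abs_lt.mp hy).1
  have h1y : (0:ℝ) < 1 + y := by linarith
  have hn0 : ((n:ℕ):ℝ) ≠ 0 := Nat.cast_ne_zero.mpr (by omega)
  by_cases hpn : p = n
  · subst hpn
    -- p = n case
    have hfac : ∀ j : ℕ, ((j.factorial : ℕ):ℝ) ≠ 0 :=
      fun j => Nat.cast_ne_zero.mpr (Nat.factorial_ne_zero j)
    -- LHS
    have hBk : ∀ k ∈ Icc 1 p, (B p p k : ℝ) = (p.choose k : ℝ) := by
      intro k hk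
      simp only [Finset.mem_Icc] at hk
      have hS : ∑ r ∈ range (p + 1),
          C (p:ℤ) (r:ℤ) * C ((p : ℤ) - p) (r:ℤ) * C ((p : ℤ) - r - 1) ((k : ℤ) - r - 1)
            = ((p-1).choose (k-1) : ℚ) := by
        rw [Finset.sum_eq_single 0]
        · have h3 : _root_.C ((p:ℤ) - (0:ℕ) - 1) ((k:ℤ) - (0:ℕ) - 1)
              = (((p-1).choose (k-1)) : ℚ) := by
            rw [show (p:ℤ) - (0:ℕ) - 1 = ((p - 1 : ℕ):ℤ) by omega,
              show (k:ℤ) - (0:ℕ) - 1 = ((k - 1 : ℕ):ℤ) by omega, Cnat]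
          push_cast at h3 ⊢
          rw [h3]
          simp [_root_.C]
        · intro r hr hr0
          have h2 : _root_.C ((p:ℤ) - p) (r:ℤ) = 0 := by
            rw [show ((p:ℤ) - p) = ((0:ℕ):ℤ) by push_cast; ring, Cnat,
              Nat.choose_eq_zero_of_lt (by omega), Nat.cast_zero]
          rw [h2, mul_zero, zero_mul]
        · intro h; simp at h
      have hqq : B p p k = (p.choose k : ℚ) := by
        rw [B, hS]
        have hnat : ((p * ((p-1).choose (k-1)) : ℕ) : ℚ) = ((p.choose k * k : ℕ) : ℚ) := by
          congr 1
          have := Nat.add_one_mul_choose_eq (p-1) (k-1)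
          rw [show p-1+1 = p by omega, show k-1+1 = k by omega] at this
          exact this
        push_cast at hnat
        have hk0 : (k:ℚ) ≠ 0 := Nat.cast_ne_zero.mpr (by omega)
        rw [div_mul_eq_mul_div, hnat, mul_div_cancel_right₀ _ hk0]
      rw [hqq]
      norm_cast
    have hLHS : ∑ k ∈ Icc 1 p, (B p p k : ℝ) * y^k = (y+1)^p - 1 := by
      rw [Finset.sum_congr rfl (fun k hk => by rw [hBk k hk])]
      have hbin : (y+1)^p = ∑ k ∈ range (p+1), y^k * ((p.choose k):ℝ) := by
        rw [add_pow]; exact Finset.sum_congr rfl fun k _ => by rw [one_pow, mul_one]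
      have hins : range (p+1) = insert 0 (Icc 1 p) := by
        ext a; simp only [Finset.mem_range, Finset.mem_insert, Finset.mem_Icc]; omega
      rw [hbin, hins, Finset.sum_insert (by simp), pow_zero, one_mul, Nat.choose_zero_right,
        Nat.cast_one, add_sub_cancel_left]
      exact Finset.sum_congr rfl fun k _ => by ring
    have hp0 : ((p:ℕ):ℝ) ≠ 0 := hn0
    have hsummand : ∀ j : ℕ, asc ((p:ℝ)+1) j * asc ((p:ℝ) - (p:ℕ) + 1) j /
          (asc 2 j * (j.factorial:ℝ)) * (-y)^j
        = ((p+j).choose (j+1) : ℝ) * (-y)^(j+1) / ((-y) * p) := by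
      intro j
      rw [show (p:ℝ) - (p:ℕ) + 1 = 1 by ring, asc_one, asc_pos, asc_two]
      have hnat2 : ((p+j).choose j : ℝ) * p = ((p+j).choose (j+1):ℝ) * (j+1) := by
        have h := Nat.choose_succ_right_eq (p+j) j
        rw [show p + j - j = p by omega] at h
        exact_mod_cast (congrArg (Nat.cast (R := ℝ)) h).symm
      have h1 : ((j+1).factorial : ℝ) = ((j:ℝ)+1) * j.factorial := by
        rw [Nat.factorial_succ]; push_cast; ring
      rw [h1, pow_succ]
      have hj1 : ((j:ℝ)+1) ≠ 0 := by positivity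
      field_simp
      linear_combination (y^j * (-1)^j) * hnat2
    have hb := hasSum_choose_mul_geometric_of_norm_lt_one (𝕜 := ℝ) (p-1) (r := -y)
      (by rwa [norm_neg, Real.norm_eq_abs])
    rw [show (1:ℝ) - -y = 1 + y by ring, show p-1+1 = p by omega] at hb
    have hb2 : HasSum (fun j => (((j+1) + (p-1)).choose (p-1) : ℝ) * (-y)^(j+1))
        (1/(1+y)^p - 1) := by
      refine (hasSum_nat_add_iff
        (f := fun m => ((m + (p-1)).choose (p-1) : ℝ) * (-y)^m) 1).mpr ?_
      rw [Finset.sum_range_one]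
      have h0 : ((0 + (p-1)).choose (p-1) : ℝ) * (-y)^0 = 1 := by simp
      rw [h0, sub_add_cancel]
      exact hb
    have hb3 : HasSum (fun j => ((p+j).choose (j+1) : ℝ) * (-y)^(j+1)) (1/(1+y)^p - 1) := by
      have heq : (fun j : ℕ => ((p+j).choose (j+1) : ℝ) * (-y)^(j+1))
          = (fun j : ℕ => (((j+1) + (p-1)).choose (p-1) : ℝ) * (-y)^(j+1)) := by
        funext j
        congr 2
        rw [show (j+1) + (p-1) = p + j by omega]
        rw [show j + 1 = (p+j) - (p-1) by omega]
        exact Nat.choose_symm (n := p+j) (k := p-1) (by omega)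
      rw [heq]
      exact hb2
    have hS := hb3.div_const ((-y) * p)
    have htsum : (∑' j : ℕ, asc ((p:ℝ)+1) j * asc ((p:ℝ) - (p:ℕ) + 1) j /
          (asc 2 j * (j.factorial:ℝ)) * (-y)^j) = (1/(1+y)^p - 1)/((-y) * p) := by
      rw [← hS.tsum_eq]
      exact tsum_congr fun j => by rw [hsummand j]
    rw [hLHS, htsum]
    have h1y' : (1:ℝ) + y ≠ 0 := ne_of_gt h1y
    field_simp
    ring
  · -- p < n case
    obtain ⟨q, hq1, rfl⟩ : ∃ q, 1 ≤ q ∧ n = p + q := ⟨n - p, by omega, by omega⟩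
    have hcast : (p:ℝ) - ((p+q:ℕ):ℝ) + 1 = 1 - q := by push_cast; ring
    have hzero : ∀ j ∉ range q, asc ((p:ℝ)+1) j * asc ((p:ℝ) - ((p+q:ℕ):ℝ) + 1) j /
        (asc 2 j * (j.factorial:ℝ)) * (-y)^j = 0 := by
      intro j hj
      rw [hcast, asc_neg_zero q j hq1 (by simpa using hj), mul_zero, zero_div, zero_mul]
    have htsum : (∑' j : ℕ, asc ((p:ℝ)+1) j * asc ((p:ℝ) - ((p+q:ℕ):ℝ) + 1) j /
          (asc 2 j * (j.factorial:ℝ)) * (-y)^j)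
        = ∑ j ∈ range q, (((p+j).choose j * (q-1).choose j : ℝ)/(j+1)) * y^j := by
      rw [tsum_eq_sum hzero]
      refine Finset.sum_congr rfl fun j hj => ?_
      simp only [Finset.mem_range] at hj
      rw [hcast, asc_pos, asc_neg q j hj, asc_two]
      have h1 : ((j+1).factorial : ℝ) = ((j:ℝ)+1) * j.factorial := by
        rw [Nat.factorial_succ]; push_cast; ring
      rw [h1]
      have hj1 : ((j:ℝ)+1) ≠ 0 := by positivity
      have hfj : ((j.factorial:ℕ):ℝ) ≠ 0 := Nat.cast_ne_zero.mpr (Nat.factorial_ne_zero j)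
      calc ((p+j).choose j : ℝ) * j.factorial *
              ((-1)^j * ((q-1).choose j * j.factorial)) /
              ((((j:ℝ)+1) * j.factorial) * j.factorial) * (-y)^j
          = (((p+j).choose j * (q-1).choose j : ℝ)/(j+1)) * (((-1) * -y)^j) := by
            rw [mul_pow]; field_simp
        _ = (((p+j).choose j * (q-1).choose j : ℝ)/(j+1)) * y^j := by norm_num
    have hLHSP : ∑ k ∈ Icc 1 (p+q), (B (p+q) p k : ℝ) * y^k = (Pp p q).eval y := by
      rw [Pp, eval_finset_sum]
      exact Finset.sum_congr rfl fun k _ => by rw [eval_mul, eval_C, eval_pow, eval_X]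
    have hFev : (Fp p q).eval y
        = ∑ j ∈ range q, (((p+j).choose j * (q-1).choose j : ℝ)/(j+1)) * y^j := by
      rw [Fp, eval_finset_sum]
      exact Finset.sum_congr rfl fun j _ => by rw [eval_mul, eval_C, eval_pow, eval_X]
    rw [hLHSP, PQ p q hq1, htsum, ← hFev]
    simp only [eval_mul, eval_C, eval_pow, eval_X, eval_add, eval_one]
    ring
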